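/- For 1 ≤ p ≤ q < ∞, the Mazur map M : ℓ^q_1(X) → ℓ^p_1(X), defined by (Mf)(x) = |f(x)|^{q/p − 1} f(x), maps the unit sphere of ℓ^q(X) to the unit sphere of ℓ^p(X) and is (q/p)-Lipschitz. -/

import Mathlib

open Real Set intervalIntegral

/-- Derivative of the scalar Mazur map `y ↦ |y|^(r-1) * y`. -/
lemma hasDerivAt_spow {r : ℝ} (hr : 1 < r) (x : ℝ) :
    HasDerivAt (fun y : ℝ => |y| ^ (r - 1) * y) (r * |x| ^ (r - 1)) x := by
  rcases lt_trichotomy x 0 with hx | rfl | hx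
  · have h3 : HasDerivAt (fun z : ℝ => z ^ r) (r * (-x) ^ (r - 1)) (-x) :=
      Real.hasDerivAt_rpow_const (Or.inl (by linarith))
    have h1 : HasDerivAt (fun y : ℝ => -((-y) ^ r)) (r * (-x) ^ (r - 1)) x := by
      have h2 : HasDerivAt (fun y : ℝ => -y) (-1) x := (hasDerivAt_id x).neg
      have := (h3.comp x h2).neg
      exact this.congr_deriv (by ring)
    have heq : (fun y : ℝ => |y| ^ (r - 1) * y) =ᶠ[nhds x] (fun y : ℝ => -((-y) ^ r)) := by
      filter_upwards [Iio_mem_nhds hx] with y hy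
      have hy' : (0:ℝ) < -y := by simpa using hy
      rw [abs_of_neg hy, show r = (r-1) + 1 by ring, Real.rpow_add_one (ne_of_gt hy')]
      ring_nf
    have := h1.congr_of_eventuallyEq heq
    rw [abs_of_neg hx]
    exact this
  · have h0 : r * |(0:ℝ)| ^ (r - 1) = 0 := by
      rw [abs_zero, Real.zero_rpow (by linarith : r - 1 ≠ 0), mul_zero]
    rw [h0, hasDerivAt_iff_tendsto_slope]
    have heq : (slope (fun y : ℝ => |y| ^ (r - 1) * y) 0) =ᶠ[nhdsWithin 0 {(0:ℝ)}ᶜ]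
        fun y => |y| ^ (r - 1) := by
      filter_upwards [self_mem_nhdsWithin] with y hy
      have hy0 : y ≠ 0 := hy
      simp only [slope_def_field]
      rw [abs_zero, Real.zero_rpow (by linarith : r - 1 ≠ 0)]
      field_simp
      ring
    rw [Filter.tendsto_congr' heq]
    have hc : ContinuousAt (fun y : ℝ => |y| ^ (r - 1)) 0 := by
      have := (Real.continuousAt_rpow_const (|(0:ℝ)|) (r - 1) (Or.inr (by linarith)))
      exact this.comp continuous_abs.continuousAt
    have : Filter.Tendsto (fun y : ℝ => |y| ^ (r - 1)) (nhds 0) (nhds 0) := by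
      have h := hc.tendsto
      simpa [Real.zero_rpow (by linarith : r - 1 ≠ 0)] using h
    exact this.mono_left nhdsWithin_le_nhds
  · have h3 : HasDerivAt (fun z : ℝ => z ^ r) (r * x ^ (r - 1)) x :=
      Real.hasDerivAt_rpow_const (Or.inl (ne_of_gt hx))
    have heq : (fun y : ℝ => |y| ^ (r - 1) * y) =ᶠ[nhds x] (fun y : ℝ => y ^ r) := by
      filter_upwards [Ioi_mem_nhds hx] with y hy
      rw [abs_of_pos hy, show r = (r-1) + 1 by ring, Real.rpow_add_one (ne_of_gt hy)]
      ring_nf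
    have := h3.congr_of_eventuallyEq heq
    rw [abs_of_pos hx]
    exact this

/-- two-point convexity of `|·|^r` -/
lemma abs_rpow_convex {r : ℝ} (hr : 1 ≤ r) {t1 t2 : ℝ} (h1 : 0 ≤ t1) (h2 : 0 ≤ t2)
    (hsum : t1 + t2 = 1) (a b : ℝ) :
    |t1 * a + t2 * b| ^ r ≤ t1 * |a| ^ r + t2 * |b| ^ r := by
  have habs : |t1 * a + t2 * b| ≤ t1 * |a| + t2 * |b| := by
    calc |t1 * a + t2 * b| ≤ |t1 * a| + |t2 * b| := abs_add_le _ _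
    _ = t1 * |a| + t2 * |b| := by rw [abs_mul, abs_mul, abs_of_nonneg h1, abs_of_nonneg h2]
  have h3 : |t1 * a + t2 * b| ^ r ≤ (t1 * |a| + t2 * |b|) ^ r :=
    Real.rpow_le_rpow (abs_nonneg _) habs (by linarith)
  refine h3.trans ?_
  have := (convexOn_rpow hr).2 (Set.mem_Ici.2 (abs_nonneg a)) (Set.mem_Ici.2 (abs_nonneg b))
    h1 h2 hsum
  simpa using this

lemma mazur_key_le {r : ℝ} (hr : 1 < r) {a b : ℝ} (hba : b ≤ a) :
    |(|a| ^ (r-1) * a - |b| ^ (r-1) * b)| ≤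
      r * (a - b) * ((|a| ^ r + |b| ^ r) / 2) ^ ((r-1)/r) := by
  rcases eq_or_lt_of_le hba with rfl | hba
  · simp
  have hr0 : (0:ℝ) < r := by linarith
  set c := |b| ^ r with hc
  set d := |a| ^ r with hd
  have hc0 : 0 ≤ c := Real.rpow_nonneg (abs_nonneg b) r
  have hd0 : 0 ≤ d := Real.rpow_nonneg (abs_nonneg a) r
  set h2 : ℝ := (d + c) / 2 with hh2
  have hh20 : 0 ≤ h2 := by positivity
  rcases eq_or_lt_of_le hh20 with hh2z | hh2pos
  · -- h2 = 0 : a = b = 0, contradiction with b < a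
    exfalso
    have hsum0 : d + c = 0 := by
      have h' : (d + c) / 2 = 0 := hh2z.symm
      linarith
    have hdz : d = 0 := by linarith
    have hcz : c = 0 := by linarith
    have ha0 : a = 0 := by simpa using (Real.rpow_eq_zero (abs_nonneg a) (ne_of_gt hr0)).1 hdz
    have hb0 : b = 0 := by simpa using (Real.rpow_eq_zero (abs_nonneg b) (ne_of_gt hr0)).1 hcz
    rw [ha0, hb0] at hba; exact lt_irrefl 0 hba
  -- now h2 > 0
  set A : ℝ := h2 ^ (r⁻¹) with hA
  have hApos : 0 < A := Real.rpow_pos_of_pos hh2pos _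
  have hAr : A ^ r = h2 := Real.rpow_inv_rpow hh20 (ne_of_gt hr0)
  set lin : ℝ → ℝ := fun x => ((a - x) / (a - b)) * c + ((x - b) / (a - b)) * d with hlin
  have hab0 : a - b ≠ 0 := ne_of_gt (by linarith)
  -- FTC
  have hder : ∀ x ∈ Set.uIcc b a, HasDerivAt (fun y : ℝ => |y| ^ (r-1) * y) (r * |x| ^ (r-1)) x :=
    fun x _ => hasDerivAt_spow hr x
  have hcont_pow : Continuous fun x : ℝ => |x| ^ (r - 1) :=
    (Real.continuous_rpow_const (by linarith)).comp continuous_abs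
  have hcontρ : Continuous fun x : ℝ => r * |x| ^ (r-1) := continuous_const.mul hcont_pow
  have hFTC : ∫ x in b..a, r * |x| ^ (r-1) = |a| ^ (r-1) * a - |b| ^ (r-1) * b :=
    intervalIntegral.integral_eq_sub_of_hasDerivAt hder (hcontρ.intervalIntegrable b a)
  have hInn : 0 ≤ ∫ x in b..a, r * |x| ^ (r-1) :=
    intervalIntegral.integral_nonneg hba.le (fun u _ => by positivity)
  rw [← hFTC, abs_of_nonneg hInn]
  -- pointwise bound
  have hconj : r.HolderConjugate (r / (r - 1)) := by
    rw [Real.holderConjugate_iff]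
    constructor
    · exact hr
    · field_simp
      ring
  have hlincont : Continuous lin := by
    apply Continuous.add
    · exact ((continuous_const.sub continuous_id).div_const _).mul continuous_const
    · exact ((continuous_id.sub continuous_const).div_const _).mul continuous_const
  have hkeypt : ∀ x ∈ Set.Icc b a, A * (r * |x| ^ (r-1)) ≤ A ^ r + (r - 1) * lin x := by
    intro x hx
    have hyoung := Real.young_inequality_of_nonneg hApos.le
      (Real.rpow_nonneg (abs_nonneg x) (r-1)) hconj
    have hxp : (|x| ^ (r-1)) ^ (r/(r-1)) = |x| ^ r := by
      rw [← Real.rpow_mul (abs_nonneg x)]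
      congr 1
      rw [mul_comm, div_mul_cancel₀ r (by linarith : r - 1 ≠ 0)]
    rw [hxp] at hyoung
    have hconv : |x| ^ r ≤ lin x := by
      have h1 : 0 ≤ (a - x)/(a - b) := by
        apply div_nonneg _ (by linarith)
        linarith [hx.2]
      have h2' : 0 ≤ (x - b)/(a - b) := by
        apply div_nonneg _ (by linarith)
        linarith [hx.1]
      have hs : (a - x)/(a - b) + (x - b)/(a - b) = 1 := by field_simp; ring
      have hxeq : (a - x)/(a - b) * b + (x - b)/(a - b) * a = x := by field_simp; ring
      have hcv := abs_rpow_convex hr.le h1 h2' hs b a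
      rw [hxeq] at hcv
      exact hcv
    calc A * (r * |x| ^ (r-1)) = r * (A * |x| ^ (r-1)) := by ring
      _ ≤ r * (A ^ r / r + |x| ^ r / (r / (r-1))) :=
          mul_le_mul_of_nonneg_left hyoung hr0.le
      _ = A ^ r + (r - 1) * |x| ^ r := by field_simp
      _ ≤ A ^ r + (r - 1) * lin x :=
          add_le_add (le_refl _) (mul_le_mul_of_nonneg_left hconv (by linarith))
  have hlinint : IntervalIntegrable lin MeasureTheory.volume b a :=
    hlincont.intervalIntegrable _ _
  have hlinval : ∫ x in b..a, lin x = (a - b) * h2 := by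
    have hfun : lin = fun x => (a * c - b * d)/(a - b) + ((d - c)/(a - b)) * x := by
      funext x
      show ((a - x) / (a - b)) * c + ((x - b) / (a - b)) * d = _
      field_simp
      ring
    rw [hfun]
    have hi2 : IntervalIntegrable (fun x : ℝ => (d - c)/(a - b) * x)
        MeasureTheory.volume b a := by
      apply Continuous.intervalIntegrable
      exact continuous_const.mul continuous_id
    rw [intervalIntegral.integral_add intervalIntegrable_const hi2]
    rw [intervalIntegral.integral_const, intervalIntegral.integral_const_mul, integral_id]
    simp only [smul_eq_mul]
    show _ = (a - b) * ((d + c) / 2)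
    field_simp
    ring
  have hmain : (∫ x in b..a, r * |x| ^ (r-1)) * A ≤ r * ((a - b) * h2) := by
    rw [mul_comm, ← intervalIntegral.integral_const_mul]
    have hint1 : IntervalIntegrable (fun x => A * (r * |x| ^ (r-1)))
        MeasureTheory.volume b a := (continuous_const.mul hcontρ).intervalIntegrable _ _
    have hint2 : IntervalIntegrable (fun x => A ^ r + (r - 1) * lin x)
        MeasureTheory.volume b a :=
      (continuous_const.add (continuous_const.mul hlincont)).intervalIntegrable _ _
    calc (∫ x in b..a, A * (r * |x| ^ (r-1)))
        ≤ ∫ x in b..a, (A ^ r + (r - 1) * lin x) :=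
          intervalIntegral.integral_mono_on hba.le hint1 hint2 hkeypt
      _ = (a - b) * A ^ r + (r - 1) * ((a - b) * h2) := by
          rw [intervalIntegral.integral_add intervalIntegrable_const
            (hlinint.const_mul _), intervalIntegral.integral_const,
            intervalIntegral.integral_const_mul, hlinval]
          simp [smul_eq_mul]
      _ = r * ((a - b) * h2) := by rw [hAr]; ring
  have hpow : h2 ^ ((r - 1)/r) = h2 / A := by
    have he : (r-1)/r = 1 - r⁻¹ := by field_simp
    rw [he, Real.rpow_sub hh2pos, Real.rpow_one, hA]
  rw [hpow]
  rw [show r * (a - b) * (h2 / A) = r * ((a - b) * h2) / A by ring]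
  rw [le_div_iff₀ hApos]
  exact hmain

lemma mazur_key {r : ℝ} (hr : 1 < r) (a b : ℝ) :
    |(|a| ^ (r-1) * a - |b| ^ (r-1) * b)| ≤
      r * |a - b| * ((|a| ^ r + |b| ^ r) / 2) ^ ((r-1)/r) := by
  rcases le_total b a with h | h
  · rw [abs_of_nonneg (sub_nonneg.2 h)]
    exact mazur_key_le hr h
  · rw [abs_sub_comm (|a| ^ (r-1) * a), abs_sub_comm a b,
      abs_of_nonneg (sub_nonneg.2 h), add_comm (|a| ^ r)]
    exact mazur_key_le hr h

/-- power mean monotonicity, two points, exponents `0 < r ≤ s`. -/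
lemma pow_mean_le {x y r s : ℝ} (hx : 0 ≤ x) (hy : 0 ≤ y) (hr : 0 < r) (hrs : r ≤ s)
    {e : ℝ} (he : 0 ≤ e) :
    ((x ^ r + y ^ r) / 2) ^ (e / r) ≤ ((x ^ s + y ^ s) / 2) ^ (e / s) := by
  have hs : 0 < s := lt_of_lt_of_le hr hrs
  have ht : 1 ≤ s / r := (le_div_iff₀ hr).2 (by linarith)
  have hXr : 0 ≤ x ^ r := Real.rpow_nonneg hx r
  have hYr : 0 ≤ y ^ r := Real.rpow_nonneg hy r
  -- Jensen: ((X+Y)/2)^(s/r) ≤ (X^(s/r) + Y^(s/r))/2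
  have hjen : ((x ^ r + y ^ r) / 2) ^ (s / r) ≤ (x ^ s + y ^ s) / 2 := by
    have := (convexOn_rpow ht).2 (Set.mem_Ici.2 hXr) (Set.mem_Ici.2 hYr)
      (by norm_num : (0:ℝ) ≤ 1/2) (by norm_num : (0:ℝ) ≤ 1/2) (by norm_num)
    simp only [smul_eq_mul] at this
    have hxs : (x ^ r) ^ (s / r) = x ^ s := by
      rw [← Real.rpow_mul hx]
      congr 1
      field_simp
    have hys : (y ^ r) ^ (s / r) = y ^ s := by
      rw [← Real.rpow_mul hy]
      congr 1
      field_simp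
    calc ((x ^ r + y ^ r) / 2) ^ (s / r)
        = (1/2 * x ^ r + 1/2 * y ^ r) ^ (s/r) := by ring_nf
      _ ≤ 1/2 * (x ^ r) ^ (s/r) + 1/2 * (y ^ r) ^ (s/r) := this
      _ = (x ^ s + y ^ s) / 2 := by rw [hxs, hys]; ring
  have hbase : 0 ≤ (x ^ r + y ^ r) / 2 := by positivity
  calc ((x ^ r + y ^ r) / 2) ^ (e / r)
      = (((x ^ r + y ^ r) / 2) ^ (s / r)) ^ (e / s) := by
        rw [← Real.rpow_mul hbase]
        congr 1
        field_simp
    _ ≤ ((x ^ s + y ^ s) / 2) ^ (e / s) :=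
        Real.rpow_le_rpow (Real.rpow_nonneg hbase _) hjen (by positivity)

lemma rpow_add_le_two_rpow {s X Y : ℝ} (hs : 1 ≤ s) (hX : 0 ≤ X) (hY : 0 ≤ Y) :
    (X + Y) ^ s ≤ 2 ^ s * (X ^ s + Y ^ s) := by
  have h3 := abs_rpow_convex hs (by norm_num : (0:ℝ) ≤ 1/2) (by norm_num : (0:ℝ) ≤ 1/2)
    (by norm_num) X Y
  rw [abs_of_nonneg hX, abs_of_nonneg hY,
    abs_of_nonneg (by positivity : (0:ℝ) ≤ 1/2 * X + 1/2 * Y)] at h3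
  have h5 : (X + Y) ^ s = 2 ^ s * (1/2 * X + 1/2 * Y) ^ s := by
    rw [← Real.mul_rpow (by norm_num) (by positivity)]
    congr 1
    ring
  rw [h5]
  have h20 : (0:ℝ) ≤ 2 ^ s := by positivity
  calc 2 ^ s * (1/2 * X + 1/2 * Y) ^ s ≤ 2 ^ s * (1/2 * X ^ s + 1/2 * Y ^ s) :=
      mul_le_mul_of_nonneg_left h3 h20
    _ ≤ 2 ^ s * (X ^ s + Y ^ s) := by
      apply mul_le_mul_of_nonneg_left _ h20
      have := Real.rpow_nonneg hX s
      have := Real.rpow_nonneg hY s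
      linarith

/-- the Mazur map `(Mf)(x) = |f x|^{q/p-1} f x` maps the unit sphere of
`ℓ^q(X)` to the unit sphere of `ℓ^p(X)` and is `(q/p)`-Lipschitz, for `1 ≤ p ≤ q`. -/
theorem stmt5 {X : Type*} (p q : ℝ) (hp : 1 ≤ p) (hpq : p ≤ q)
    (f g : X → ℝ) (hf : ∑' x, |f x| ^ q = 1) (hg : ∑' x, |g x| ^ q = 1) :
    (∑' x, abs (|f x| ^ (q/p - 1) * f x) ^ p = 1) ∧
    (∑' x, abs (|f x| ^ (q/p - 1) * f x - |g x| ^ (q/p - 1) * g x) ^ p) ^ (1/p)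
      ≤ (q / p) * (∑' x, |f x - g x| ^ q) ^ (1/q) := by
  have hp0 : 0 < p := lt_of_lt_of_le zero_lt_one hp
  have hq0 : 0 < q := lt_of_lt_of_le hp0 hpq
  have hq1 : 1 ≤ q := le_trans hp hpq
  have hfs : Summable fun x => |f x| ^ q := by
    by_contra h
    rw [tsum_eq_zero_of_not_summable h] at hf
    norm_num at hf
  have hgs : Summable fun x => |g x| ^ q := by
    by_contra h
    rw [tsum_eq_zero_of_not_summable h] at hg
    norm_num at hg
  have habs : ∀ a : ℝ, |(|a| ^ (q/p - 1) * a)| = |a| ^ (q/p) := by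
    intro a
    rw [abs_mul, abs_of_nonneg (Real.rpow_nonneg (abs_nonneg a) _)]
    have hne : q/p - 1 + 1 ≠ 0 := by
      rw [show q/p - 1 + 1 = q/p by ring]
      positivity
    have h1 : |a| ^ (q/p - 1 + 1) = |a| ^ (q/p - 1) * |a| ^ (1:ℝ) :=
      Real.rpow_add' (abs_nonneg a) hne
    rw [Real.rpow_one] at h1
    rw [← h1]
    congr 1
    ring
  have habsp : ∀ a : ℝ, |(|a| ^ (q/p - 1) * a)| ^ p = |a| ^ q := by
    intro a
    rw [habs a, ← Real.rpow_mul (abs_nonneg a), div_mul_cancel₀ q hp0.ne']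
  have part1 : (∑' x, |(|f x| ^ (q/p - 1) * f x)| ^ p) = 1 := by
    rw [tsum_congr (fun x => habsp (f x))]
    exact hf
  refine ⟨part1, ?_⟩
  rcases eq_or_lt_of_le hpq with rfl | hpq'
  · -- case p = q
    have hpp : p / p - 1 = 0 := by rw [div_self hp0.ne']; ring
    rw [hpp]
    simp only [Real.rpow_zero, one_mul]
    rw [div_self hp0.ne', one_mul]
  · -- case p < q
    set r := q / p with hrdef
    have hr1' : 1 < r := (one_lt_div hp0).2 hpq'
    have hr0 : (0:ℝ) ≤ r := by positivity
    have hrq : r ≤ q := by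
      rw [hrdef, div_le_iff₀ hp0]
      nlinarith
    have hqp0 : q - p ≠ 0 := ne_of_gt (by linarith)
    -- summability of |f - g|^q
    have hus : Summable fun x => |f x - g x| ^ q := by
      apply Summable.of_nonneg_of_le (fun x => Real.rpow_nonneg (abs_nonneg _) q)
        (fun x => ?_) ((hfs.add hgs).mul_left ((2:ℝ) ^ q))
      calc |f x - g x| ^ q ≤ (|f x| + |g x|) ^ q :=
          Real.rpow_le_rpow (abs_nonneg _) (abs_sub _ _) hq0.le
        _ ≤ 2 ^ q * (|f x| ^ q + |g x| ^ q) :=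
          rpow_add_le_two_rpow hq1 (abs_nonneg _) (abs_nonneg _)
    -- summability of D^p
    have hDs : Summable fun x => |(|f x| ^ (r - 1) * f x - |g x| ^ (r - 1) * g x)| ^ p := by
      apply Summable.of_nonneg_of_le (fun x => Real.rpow_nonneg (abs_nonneg _) p)
        (fun x => ?_) ((hfs.add hgs).mul_left ((2:ℝ) ^ p))
      calc |(|f x| ^ (r - 1) * f x - |g x| ^ (r - 1) * g x)| ^ p
          ≤ (|(|f x| ^ (r - 1) * f x)| + |(|g x| ^ (r - 1) * g x)|) ^ p :=
            Real.rpow_le_rpow (abs_nonneg _) (abs_sub _ _) hp0.le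
        _ = (|f x| ^ r + |g x| ^ r) ^ p := by rw [habs (f x), habs (g x)]
        _ ≤ 2 ^ p * ((|f x| ^ r) ^ p + (|g x| ^ r) ^ p) :=
            rpow_add_le_two_rpow hp (Real.rpow_nonneg (abs_nonneg _) r)
              (Real.rpow_nonneg (abs_nonneg _) r)
        _ = 2 ^ p * (|f x| ^ q + |g x| ^ q) := by
            rw [← Real.rpow_mul (abs_nonneg (f x)), ← Real.rpow_mul (abs_nonneg (g x)),
              div_mul_cancel₀ q hp0.ne']
    -- H facts
    have hH0 : ∀ x : X, (0:ℝ) ≤ (|f x| ^ q + |g x| ^ q) / 2 := fun x => by positivity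
    have hHs : Summable fun x => (|f x| ^ q + |g x| ^ q) / 2 := (hfs.add hgs).div_const 2
    have hHsum : ∑' x, (|f x| ^ q + |g x| ^ q) / 2 = 1 := by
      rw [tsum_div_const, hfs.tsum_add hgs, hf, hg]
      norm_num
    -- pointwise estimate
    have hpoint : ∀ x, |(|f x| ^ (r - 1) * f x - |g x| ^ (r - 1) * g x)| ^ p
        ≤ r ^ p * (|f x - g x| ^ p * (((|f x| ^ q + |g x| ^ q) / 2) ^ ((q - p)/q))) := by
      intro x
      have h1 := mazur_key hr1' (f x) (g x)
      have h2 : ((|f x| ^ r + |g x| ^ r)/2) ^ ((r-1)/r)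
          ≤ ((|f x| ^ q + |g x| ^ q)/2) ^ ((r-1)/q) :=
        pow_mean_le (abs_nonneg _) (abs_nonneg _) (by linarith) hrq (by linarith)
      have h3 : |(|f x| ^ (r - 1) * f x - |g x| ^ (r - 1) * g x)|
          ≤ r * |f x - g x| * ((|f x| ^ q + |g x| ^ q)/2) ^ ((r-1)/q) :=
        h1.trans (mul_le_mul_of_nonneg_left h2 (by positivity))
      have h4 := Real.rpow_le_rpow (abs_nonneg _) h3 hp0.le
      refine h4.trans_eq ?_
      rw [Real.mul_rpow (by positivity) (Real.rpow_nonneg (hH0 x) _),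
        Real.mul_rpow (by positivity) (abs_nonneg _),
        ← Real.rpow_mul (hH0 x)]
      rw [show (r - 1)/q * p = (q - p)/q by rw [hrdef]; field_simp]
      ring
    -- Hölder
    have hconj : r.HolderConjugate (q/(q - p)) := by
      rw [Real.holderConjugate_iff]
      constructor
      · exact hr1'
      · rw [hrdef, inv_div, inv_div, ← add_div,
          show p + (q - p) = q by ring, div_self hq0.ne']
    have hFq : ∀ x, (|f x - g x| ^ p) ^ r = |f x - g x| ^ q := by
      intro x
      rw [← Real.rpow_mul (abs_nonneg _), hrdef, mul_div_cancel₀ q hp0.ne']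
    have hGq : ∀ x, ((((|f x| ^ q + |g x| ^ q) / 2)) ^ ((q - p)/q)) ^ (q/(q - p))
        = (|f x| ^ q + |g x| ^ q) / 2 := by
      intro x
      rw [← Real.rpow_mul (hH0 x),
        show (q - p)/q * (q/(q - p)) = 1 by field_simp, Real.rpow_one]
    have hFsum : Summable fun x => (|f x - g x| ^ p) ^ r :=
      hus.congr fun x => (hFq x).symm
    have hGsum : Summable fun x =>
        ((((|f x| ^ q + |g x| ^ q) / 2)) ^ ((q - p)/q)) ^ (q/(q - p)) :=
      hHs.congr fun x => (hGq x).symm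
    have holder := Real.inner_le_Lp_mul_Lq_tsum_of_nonneg hconj
      (f := fun x => |f x - g x| ^ p)
      (g := fun x => ((|f x| ^ q + |g x| ^ q) / 2) ^ ((q - p)/q))
      (fun x => Real.rpow_nonneg (abs_nonneg _) p)
      (fun x => Real.rpow_nonneg (hH0 x) _) hFsum hGsum
    have hle2 : ∑' x, |f x - g x| ^ p * ((|f x| ^ q + |g x| ^ q) / 2) ^ ((q - p)/q)
        ≤ (∑' x, |f x - g x| ^ q) ^ (1/r) := by
      have h := holder
      rw [tsum_congr hFq, tsum_congr hGq, hHsum, Real.one_rpow, mul_one] at h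
      exact h
    have hmain : (∑' x, |(|f x| ^ (r - 1) * f x - |g x| ^ (r - 1) * g x)| ^ p)
        ≤ r ^ p * (∑' x, |f x - g x| ^ q) ^ (1/r) := by
      calc (∑' x, |(|f x| ^ (r - 1) * f x - |g x| ^ (r - 1) * g x)| ^ p)
          ≤ ∑' x, r ^ p * (|f x - g x| ^ p * (((|f x| ^ q + |g x| ^ q) / 2) ^ ((q - p)/q))) :=
            Summable.tsum_le_tsum hpoint hDs ((Real.summable_mul_of_Lp_Lq_of_nonneg hconj (fun x => Real.rpow_nonneg (abs_nonneg _) p) (fun x => Real.rpow_nonneg (hH0 x) _) hFsum hGsum).mul_left _)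
        _ = r ^ p * ∑' x, |f x - g x| ^ p * (((|f x| ^ q + |g x| ^ q) / 2) ^ ((q - p)/q)) :=
            tsum_mul_left
        _ ≤ r ^ p * (∑' x, |f x - g x| ^ q) ^ (1/r) :=
            mul_le_mul_of_nonneg_left hle2 (Real.rpow_nonneg hr0 p)
    have hS0 : 0 ≤ ∑' x, |(|f x| ^ (r - 1) * f x - |g x| ^ (r - 1) * g x)| ^ p :=
      tsum_nonneg fun x => Real.rpow_nonneg (abs_nonneg _) p
    have hT0 : 0 ≤ ∑' x, |f x - g x| ^ q :=
      tsum_nonneg fun x => Real.rpow_nonneg (abs_nonneg _) q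
    have hfinal := Real.rpow_le_rpow hS0 hmain (by positivity : (0:ℝ) ≤ 1/p)
    refine hfinal.trans_eq ?_
    rw [Real.mul_rpow (Real.rpow_nonneg hr0 p) (Real.rpow_nonneg hT0 _),
      one_div, Real.rpow_rpow_inv hr0 hp0.ne', ← Real.rpow_mul hT0]
    congr 1
    rw [hrdef, one_div_div, div_mul_eq_mul_div, mul_inv_cancel₀ hp0.ne']
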